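/- Let a0, c, mu0, mu1 > 0, b ∈ ℝ, and σ > a0/(2c). Set E = 3·a0²·mu1² − 2·a0·b·mu1 − 4·a0·mu0 − b² + 4·a0 and assume E·(c·σ − a0) > 0. Define B = (a0·mu1 − b)/(2·a0), ω = −(a0·mu1² − b·mu1 − mu0 + σ)·mu1, λ = √(E/(16·a0·(c·σ − a0))), d0 = √(2·c·σ − a0)·E/(4·√a0·(a0 − c·σ)), d2 = 3·√(2·c·σ − a0)·E/(8·√a0·(c·σ − a0)), h2 = 3·E/(8·(c·σ − a0)), and h0 = (3·a0²·c·mu1²·σ − 3·a0³·mu1² − 2·a0·b·c·mu1·σ + 2·a0²·b·mu1 − 4·a0·c·mu0·σ + 4·a0·c·σ² − b²·c·σ + 4·a0²·mu0 − 4·a0²·σ + a0·b²)/(4·a0·(c·σ − a0)). Then f(ξ) = d0 + d2·sech²(λ·ξ) and g(ξ) = h0 + h2·sech²(λ·ξ) satisfy the Schrödinger KdV–BBM associated ODE system with parameters a0, c, mu0, mu1, b, wave speed σ, and phase shifts B, ω. -/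

import Mathlib

lemma sech2_d1 (lam x : ℝ) :
    HasDerivAt (fun t => (1/Real.cosh (lam*t))^2)
      (-2*lam*Real.sinh (lam*x)/Real.cosh (lam*x)^3) x := by
  have h1 : HasDerivAt (fun t : ℝ => lam*t) lam x := by
    simpa using (hasDerivAt_id x).const_mul lam
  have h2 : HasDerivAt (fun t => Real.cosh (lam*t)) (Real.sinh (lam*x) * lam) x :=
    (Real.hasDerivAt_cosh (lam*x)).comp x h1
  have hne : Real.cosh (lam*x) ≠ 0 := (Real.cosh_pos _).ne'
  have h3 := (h2.inv hne).pow 2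
  have hfun : (fun t => (1/Real.cosh (lam*t))^2) = fun t => ((Real.cosh (lam*t))⁻¹)^2 := by
    simp [one_div]
  rw [hfun]
  refine h3.congr_deriv ?_
  norm_num
  field_simp

lemma sech2_d2 (lam x : ℝ) :
    HasDerivAt (fun t => -2*lam*Real.sinh (lam*t)/Real.cosh (lam*t)^3)
      (lam^2*(4*(1/Real.cosh (lam*x))^2 - 6*((1/Real.cosh (lam*x))^2)^2)) x := by
  have h1 : HasDerivAt (fun t : ℝ => lam*t) lam x := by
    simpa using (hasDerivAt_id x).const_mul lam
  have hs : HasDerivAt (fun t => Real.sinh (lam*t)) (Real.cosh (lam*x) * lam) x :=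
    (Real.hasDerivAt_sinh (lam*x)).comp x h1
  have hc : HasDerivAt (fun t => Real.cosh (lam*t)) (Real.sinh (lam*x) * lam) x :=
    (Real.hasDerivAt_cosh (lam*x)).comp x h1
  have hf : HasDerivAt (fun t => -2*lam*Real.sinh (lam*t)) (-2*lam*(Real.cosh (lam*x) * lam)) x :=
    hs.const_mul (-2*lam)
  have hg : HasDerivAt (fun t => Real.cosh (lam*t)^3)
      (3*Real.cosh (lam*x)^2*(Real.sinh (lam*x) * lam)) x := by
    exact (hc.pow 3).congr_deriv (by norm_num)
  have hne : Real.cosh (lam*x) ≠ 0 := (Real.cosh_pos _).ne'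
  have hne3 : Real.cosh (lam*x)^3 ≠ 0 := pow_ne_zero 3 hne
  have hdiv := hf.div hg hne3
  refine hdiv.congr_deriv ?_
  have hs2 : Real.sinh (lam*x)^2 = Real.cosh (lam*x)^2 - 1 := Real.sinh_sq _
  field_simp
  linear_combination (6*lam^2) * hs2

lemma sech2_d3 (lam x : ℝ) :
    HasDerivAt (fun t => lam^2*(4*(1/Real.cosh (lam*t))^2 - 6*((1/Real.cosh (lam*t))^2)^2))
      (lam^2*(4*(-2*lam*Real.sinh (lam*x)/Real.cosh (lam*x)^3)
        - 12*(1/Real.cosh (lam*x))^2*(-2*lam*Real.sinh (lam*x)/Real.cosh (lam*x)^3))) x := by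
  have h := sech2_d1 lam x
  have h4 := h.const_mul (4:ℝ)
  have hsq := (h.pow 2).const_mul (6:ℝ)
  have := (h4.sub hsq).const_mul (lam^2)
  refine this.congr_deriv ?_
  ring
set_option maxHeartbeats 2000000 in
theorem stmt_9
    (a0 c mu0 mu1 b : ℝ)
    (ha0 : 0 < a0) (hc : 0 < c) (hmu0 : 0 < mu0) (hmu1 : 0 < mu1)
    (σ : ℝ) (hσ : σ > a0/(2*c))
    (E : ℝ) (hE : E = 3*a0^2*mu1^2 - 2*a0*b*mu1 - 4*a0*mu0 - b^2 + 4*a0) (hEsgn : E * (c*σ - a0) > 0)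
    (B ω lam d0 d2 h2 h0 : ℝ)
    (h_B : B = (a0*mu1 - b)/(2*a0))
    (h_ω : ω = -(a0*mu1^2 - b*mu1 - mu0 + σ)*mu1)
    (h_lam : lam = Real.sqrt (E/(16*a0*(c*σ - a0))))
    (h_d0 : d0 = Real.sqrt (2*c*σ - a0)*E/(4*Real.sqrt a0*(a0 - c*σ)))
    (h_d2 : d2 = 3*Real.sqrt (2*c*σ - a0)*E/(8*Real.sqrt a0*(c*σ - a0)))
    (h_h2 : h2 = 3*E/(8*(c*σ - a0)))
    (h_h0 : h0 = (3*a0^2*c*mu1^2*σ - 3*a0^3*mu1^2 - 2*a0*b*c*mu1*σ + 2*a0^2*b*mu1 - 4*a0*c*mu0*σ + 4*a0*c*σ^2 - b^2*c*σ + 4*a0^2*mu0 - 4*a0^2*σ + a0*b^2)/(4*a0*(c*σ - a0)))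
    (f g : ℝ → ℝ)
    (hfdef : ∀ ξ : ℝ, f ξ = d0 + d2 * (1/Real.cosh (lam*ξ))^2)
    (hgdef : ∀ ξ : ℝ, g ξ = h0 + h2 * (1/Real.cosh (lam*ξ))^2) :
    ∀ ξ : ℝ,
      (deriv f ξ * g ξ + f ξ * deriv g ξ + a0 * iteratedDeriv 3 f ξ + (mu0 - σ - 3*a0*B^2 - 2*b*B) * deriv f ξ = 0) ∧
      ((B + mu1) * f ξ * g ξ + (3*a0*B + b) * iteratedDeriv 2 f ξ + (ω + B*mu0 - B*σ - a0*B^3 - b*B^2) * f ξ = 0) ∧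
      (f ξ * deriv f ξ + g ξ * deriv g ξ + (c*σ) * iteratedDeriv 3 g ξ + (1 - σ) * deriv g ξ = 0) := by
  have h2ca : (0:ℝ) < 2*c*σ - a0 := by
    have h2c : (0:ℝ) < 2*c := by linarith
    have := (div_lt_iff₀ h2c).mp hσ
    nlinarith
  have hca : c*σ - a0 ≠ 0 := by
    intro h; rw [h, mul_zero] at hEsgn; exact lt_irrefl 0 hEsgn
  have haca : a0 - c*σ ≠ 0 := fun h => hca (by linarith)
  have ha0' : a0 ≠ 0 := ha0.ne'
  have hApos : 0 < Real.sqrt a0 := Real.sqrt_pos.mpr ha0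
  have hA0 : Real.sqrt a0 ≠ 0 := hApos.ne'
  have hA2 : Real.sqrt a0 ^ 2 = a0 := Real.sq_sqrt ha0.le
  have hD2 : Real.sqrt (2*c*σ - a0) ^ 2 = 2*c*σ - a0 := Real.sq_sqrt h2ca.le
  have hrad : 0 < E/(16*a0*(c*σ - a0)) := by
    have hsq : (0:ℝ) < (c*σ - a0)^2 := by positivity
    have h1 : 0 < E*(c*σ-a0) / (16*a0*(c*σ-a0)^2) := by positivity
    have h2 : E/(16*a0*(c*σ-a0)) = E*(c*σ-a0)/(16*a0*(c*σ-a0)^2) := by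
      field_simp
    rw [h2]; exact h1
  have hl2 : lam^2 = E/(16*a0*(c*σ-a0)) := by rw [h_lam]; exact Real.sq_sqrt hrad.le
  have hd2e : d2 = -(3/2)*d0 := by
    rw [h_d2, h_d0]; field_simp; ring
  have hd0sq : d0^2 = (2*c*σ - a0)*E^2/(16*a0*(c*σ-a0)^2) := by
    rw [h_d0, div_pow, mul_pow, mul_pow, mul_pow, hD2, hA2,
      show (a0-c*σ)^2 = (c*σ-a0)^2 by ring]
    norm_num
  -- coefficient identities
  have hh2l : h2 = 6*a0*lam^2 := by
    rw [h_h2, hl2]; field_simp; ring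
  have hc0 : h2 = 3/2*(h0 + 4*a0*lam^2 + (mu0 - σ - 3*a0*B^2 - 2*b*B)) := by
    rw [h_h2, h_h0, hl2, h_B, hE]; field_simp; ring
  have hq2 : (B+mu1)*h2 = 6*lam^2*(3*a0*B+b) := by
    rw [h_h2, hl2, h_B, hE]; field_simp; ring
  have hq1 : (B+mu1)*(h2 - 3/2*h0) = 3/2*(4*lam^2*(3*a0*B+b) + (ω + B*mu0 - B*σ - a0*B^3 - b*B^2)) := by
    rw [h_h2, h_h0, hl2, h_B, h_ω, hE]; field_simp; ring
  have hq0 : (B+mu1)*h0 + (ω + B*mu0 - B*σ - a0*B^3 - b*B^2) = 0 := by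
    rw [h_h0, h_B, h_ω]; field_simp; ring
  have hr0 : -(3/2)*d0^2 + h0*h2 + 4*c*σ*lam^2*h2 + (1-σ)*h2 = 0 := by
    rw [hd0sq, h_h0, h_h2, hl2, hE]; field_simp; ring
  have hr1 : 9/4*d0^2 + h2^2 - 12*c*σ*lam^2*h2 = 0 := by
    rw [hd0sq, h_h2, hl2, hE]; field_simp; ring
  -- derivatives of f
  have hfeq : f = fun t => d0 + d2 * (1/Real.cosh (lam*t))^2 := funext hfdef
  have hgeq : g = fun t => h0 + h2 * (1/Real.cosh (lam*t))^2 := funext hgdef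
  have hf1 : ∀ x, HasDerivAt f (d2 * (-2*lam*Real.sinh (lam*x)/Real.cosh (lam*x)^3)) x := by
    intro x; rw [hfeq]; exact ((sech2_d1 lam x).const_mul d2).const_add d0
  have hdf : deriv f = fun x => d2 * (-2*lam*Real.sinh (lam*x)/Real.cosh (lam*x)^3) :=
    funext fun x => (hf1 x).deriv
  have hf2 : ∀ x, HasDerivAt (deriv f)
      (d2 * (lam^2*(4*(1/Real.cosh (lam*x))^2 - 6*((1/Real.cosh (lam*x))^2)^2))) x := by
    intro x; rw [hdf]; exact (sech2_d2 lam x).const_mul d2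
  have hddf : deriv (deriv f) = fun x =>
      d2 * (lam^2*(4*(1/Real.cosh (lam*x))^2 - 6*((1/Real.cosh (lam*x))^2)^2)) :=
    funext fun x => (hf2 x).deriv
  have hf3 : ∀ x, HasDerivAt (deriv (deriv f))
      (d2 * (lam^2*(4*(-2*lam*Real.sinh (lam*x)/Real.cosh (lam*x)^3)
        - 12*(1/Real.cosh (lam*x))^2*(-2*lam*Real.sinh (lam*x)/Real.cosh (lam*x)^3)))) x := by
    intro x; rw [hddf]; exact (sech2_d3 lam x).const_mul d2
  -- derivatives of g
  have hg1 : ∀ x, HasDerivAt g (h2 * (-2*lam*Real.sinh (lam*x)/Real.cosh (lam*x)^3)) x := by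
    intro x; rw [hgeq]; exact ((sech2_d1 lam x).const_mul h2).const_add h0
  have hdg : deriv g = fun x => h2 * (-2*lam*Real.sinh (lam*x)/Real.cosh (lam*x)^3) :=
    funext fun x => (hg1 x).deriv
  have hg2 : ∀ x, HasDerivAt (deriv g)
      (h2 * (lam^2*(4*(1/Real.cosh (lam*x))^2 - 6*((1/Real.cosh (lam*x))^2)^2))) x := by
    intro x; rw [hdg]; exact (sech2_d2 lam x).const_mul h2
  have hddg : deriv (deriv g) = fun x =>
      h2 * (lam^2*(4*(1/Real.cosh (lam*x))^2 - 6*((1/Real.cosh (lam*x))^2)^2)) :=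
    funext fun x => (hg2 x).deriv
  have hg3 : ∀ x, HasDerivAt (deriv (deriv g))
      (h2 * (lam^2*(4*(-2*lam*Real.sinh (lam*x)/Real.cosh (lam*x)^3)
        - 12*(1/Real.cosh (lam*x))^2*(-2*lam*Real.sinh (lam*x)/Real.cosh (lam*x)^3)))) x := by
    intro x; rw [hddg]; exact (sech2_d3 lam x).const_mul h2
  intro ξ
  have e2f : iteratedDeriv 2 f ξ
      = d2 * (lam^2*(4*(1/Real.cosh (lam*ξ))^2 - 6*((1/Real.cosh (lam*ξ))^2)^2)) := by
    have h : iteratedDeriv 2 f = deriv (deriv f) := by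
      rw [show (2:ℕ) = 1 + 1 from rfl, iteratedDeriv_succ, iteratedDeriv_one]
    rw [h]; exact (hf2 ξ).deriv
  have e3f : iteratedDeriv 3 f ξ
      = d2 * (lam^2*(4*(-2*lam*Real.sinh (lam*ξ)/Real.cosh (lam*ξ)^3)
        - 12*(1/Real.cosh (lam*ξ))^2*(-2*lam*Real.sinh (lam*ξ)/Real.cosh (lam*ξ)^3))) := by
    have h : iteratedDeriv 3 f = deriv (deriv (deriv f)) := by
      rw [show (3:ℕ) = 1 + 1 + 1 from rfl, iteratedDeriv_succ, iteratedDeriv_succ,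
        iteratedDeriv_one]
    rw [h]; exact (hf3 ξ).deriv
  have e3g : iteratedDeriv 3 g ξ
      = h2 * (lam^2*(4*(-2*lam*Real.sinh (lam*ξ)/Real.cosh (lam*ξ)^3)
        - 12*(1/Real.cosh (lam*ξ))^2*(-2*lam*Real.sinh (lam*ξ)/Real.cosh (lam*ξ)^3))) := by
    have h : iteratedDeriv 3 g = deriv (deriv (deriv g)) := by
      rw [show (3:ℕ) = 1 + 1 + 1 from rfl, iteratedDeriv_succ, iteratedDeriv_succ,
        iteratedDeriv_one]
    rw [h]; exact (hg3 ξ).deriv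
  set S := (1/Real.cosh (lam*ξ))^2 with hSdef
  set T := -2*lam*Real.sinh (lam*ξ)/Real.cosh (lam*ξ)^3 with hTdef
  refine ⟨?_, ?_, ?_⟩
  · rw [hfdef ξ, hgdef ξ, (hf1 ξ).deriv, (hg1 ξ).deriv, e3f, hd2e]
    linear_combination (T*d0) * hc0 + (-3*d0*S*T) * hh2l
  · rw [hfdef ξ, hgdef ξ, e2f, hd2e]
    linear_combination d0*hq0 + S*d0*hq1 + (-(3/2)*d0*S^2)*hq2
  · rw [hfdef ξ, hgdef ξ, (hf1 ξ).deriv, (hg1 ξ).deriv, e3g, hd2e]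
    linear_combination T*hr0 + S*T*hr1
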